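/- Let A be a finite-dimensional algebra over an algebraically closed field. If A admits an infinite Hom-orthogonal set of finite-dimensional modules whose k-dimensions are all bounded above by some integer D, then there exists a positive integer d ≤ D such that A admits infinitely many pairwise non-isomorphic bricks of k-dimension d. -/

import Mathlib

universe u v

open Module

/-- A finite-dimensional left module over the `k`-algebra `A`. -/
structure FDMod (k A : Type u) [Field k] [Ring A] [Algebra k A] : Type (u + 1) where
  carrier : Type u
  [addCommGroup : AddCommGroup carrier]
  [moduleK : Module k carrier]
  [moduleA : Module A carrier]
  [tower : IsScalarTower k A carrier]
  [fd : FiniteDimensional k carrier]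

attribute [instance] FDMod.addCommGroup FDMod.moduleK FDMod.moduleA FDMod.tower FDMod.fd

variable {k A : Type u} [Field k] [Ring A] [Algebra k A]

/-- `M` is a brick: `M ≠ 0` and every `A`-endomorphism of `M` is a `k`-scalar,
i.e. `End_A(M) ≅ k`. -/
def FDMod.IsBrick (M : FDMod k A) : Prop :=
  Nontrivial M.carrier ∧ ∀ f : M.carrier →ₗ[A] M.carrier, ∃ c : k, ∀ x : M.carrier, f x = c • x

/-- `M` and `N` are Hom-orthogonal: `Hom_A(M,N) = 0` and `Hom_A(N,M) = 0`. -/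
def FDMod.HomOrth (M N : FDMod k A) : Prop :=
  (∀ f : M.carrier →ₗ[A] N.carrier, f = 0) ∧ (∀ f : N.carrier →ₗ[A] M.carrier, f = 0)

/-- `M` and `N` are isomorphic as `A`-modules. -/
def FDMod.Iso (M N : FDMod k A) : Prop :=
  Nonempty (M.carrier ≃ₗ[A] N.carrier)

/-- A family of modules forms a Hom-orthogonal set: the modules are nonzero,
pairwise non-isomorphic and pairwise Hom-orthogonal. -/
def HomOrthFamily {I : Type v} (X : I → FDMod k A) : Prop :=
  (∀ i, Nontrivial (X i).carrier) ∧
  (∀ i j, i ≠ j → ¬(X i).Iso (X j)) ∧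
  (∀ i j, i ≠ j → (X i).HomOrth (X j))

/-- `A` is brick-finite: there are only finitely many isomorphism classes of bricks. -/
def BrickFinite (k A : Type u) [Field k] [Ring A] [Algebra k A] : Prop :=
  ∃ (m : ℕ) (f : Fin m → FDMod k A), ∀ N : FDMod k A, N.IsBrick → ∃ i, N.Iso (f i)

/-- `A` has rank `n`: there are exactly `n` isomorphism classes of simple modules. -/
def HasRank (k A : Type u) [Field k] [Ring A] [Algebra k A] (n : ℕ) : Prop :=
  ∃ S : Fin n → FDMod k A,
    (∀ i, IsSimpleModule A (S i).carrier) ∧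
    (∀ i j, i ≠ j → ¬(S i).Iso (S j)) ∧
    (∀ T : FDMod k A, IsSimpleModule A T.carrier → ∃ i, T.Iso (S i))

/-- Every nonzero finite-dimensional module admits a brick that is simultaneously
a quotient and a submodule of it. -/
lemma exists_brick_aux [IsAlgClosed k] :
    ∀ (n : ℕ) (M : FDMod k A), finrank k M.carrier ≤ n → Nontrivial M.carrier →
    ∃ B : FDMod k A, B.IsBrick ∧ finrank k B.carrier ≤ finrank k M.carrier ∧
      (∃ π : M.carrier →ₗ[A] B.carrier, Function.Surjective π) ∧
      (∃ ι : B.carrier →ₗ[A] M.carrier, Function.Injective ι) := by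
  intro n
  induction n with
  | zero =>
    intro M hM hnt
    exact absurd (finrank_pos (R := k) (M := M.carrier)) (by omega)
  | succ n ih =>
    intro M hM hnt
    by_cases hbr : ∀ f : M.carrier →ₗ[A] M.carrier, ∃ c : k, ∀ x : M.carrier, f x = c • x
    · exact ⟨M, ⟨hnt, hbr⟩, le_rfl, ⟨LinearMap.id, fun x => ⟨x, rfl⟩⟩,
        ⟨LinearMap.id, fun a b h => h⟩⟩
    · push_neg at hbr
      obtain ⟨f, hf⟩ := hbr
      obtain ⟨c, hc⟩ := Module.End.exists_eigenvalue (f.restrictScalars k)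
      obtain ⟨x, hx⟩ := hc.exists_hasEigenvector
      set g : M.carrier →ₗ[A] M.carrier := f - c • LinearMap.id with hg
      have hgx : g x = 0 := by
        simp only [hg, LinearMap.sub_apply, LinearMap.smul_apply, LinearMap.id_apply]
        have := hx.apply_eq_smul
        simp only [LinearMap.restrictScalars_apply] at this
        rw [this, sub_self]
      have hgne : g ≠ 0 := by
        obtain ⟨y, hy⟩ := hf c
        intro h0
        apply hy
        have : g y = 0 := by rw [h0]; rfl
        simpa [hg, sub_eq_zero] using this
      have hrange_ne_top : LinearMap.range g ≠ ⊤ := by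
        intro htop
        have hsurj : Function.Surjective g := LinearMap.range_eq_top.mp htop
        have hsurjk : Function.Surjective (g.restrictScalars k) := hsurj
        have hinj : Function.Injective (g.restrictScalars k) :=
          (LinearMap.injective_iff_surjective).mpr hsurjk
        exact hx.2 (hinj (by simpa using hgx))
      set p := LinearMap.range g with hp
      haveI : FiniteDimensional k ↥p :=
        inferInstanceAs (FiniteDimensional k ↥(p.restrictScalars k))
      have hlt : finrank k ↥p < finrank k M.carrier := by
        have h2 : p.restrictScalars k < ⊤ := by
          rw [lt_top_iff_ne_top]; simpa using hrange_ne_top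
        exact Submodule.finrank_lt (K := k) (V := M.carrier) h2.ne
      set M' : FDMod k A := ⟨↥p⟩ with hM'
      have hnt' : Nontrivial M'.carrier := by
        have : p ≠ ⊥ := by
          intro hb
          exact hgne (LinearMap.range_eq_bot.mp hb)
        exact Submodule.nontrivial_iff_ne_bot.mpr this
      obtain ⟨B, hB, hBle, ⟨π', hπ'⟩, ⟨ι', hι'⟩⟩ := ih M' (by
        have : finrank k M'.carrier < finrank k M.carrier := hlt
        omega) hnt'
      refine ⟨B, hB, ?_, ⟨π'.comp g.rangeRestrict, hπ'.comp g.surjective_rangeRestrict⟩,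
        ⟨p.subtype.comp ι', p.injective_subtype.comp hι'⟩⟩
      exact le_trans hBle (le_of_lt hlt)

/-- If `A` admits an infinite Hom-orthogonal set of
finite-dimensional modules whose `k`-dimensions are all bounded by `D`, then there
is a positive integer `d ≤ D` such that `A` admits infinitely many pairwise
non-isomorphic bricks of `k`-dimension `d`. -/
theorem stmt12 {k A : Type u} [Field k] [IsAlgClosed k] [Ring A] [Algebra k A]
    [FiniteDimensional k A] (D : ℕ) {I : Type v} [Infinite I]
    (X : I → FDMod k A) (hX : HomOrthFamily X)
    (hdim : ∀ i, finrank k (X i).carrier ≤ D) :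
    ∃ d : ℕ, 0 < d ∧ d ≤ D ∧
      ∃ (J : Type u) (B : J → FDMod k A), Infinite J ∧
        (∀ j, (B j).IsBrick) ∧ (∀ i j, i ≠ j → ¬(B i).Iso (B j)) ∧
        (∀ j, finrank k (B j).carrier = d) := by
  obtain ⟨hnt, _hniso, horth⟩ := hX
  have hex : ∀ i : I, ∃ B : FDMod k A, B.IsBrick ∧
      finrank k B.carrier ≤ finrank k (X i).carrier ∧
      (∃ π : (X i).carrier →ₗ[A] B.carrier, Function.Surjective π) ∧
      (∃ ι : B.carrier →ₗ[A] (X i).carrier, Function.Injective ι) :=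
    fun i => exists_brick_aux (finrank k (X i).carrier) (X i) le_rfl (hnt i)
  choose Bof hB using hex
  have hbrick : ∀ i, (Bof i).IsBrick := fun i => (hB i).1
  have hle : ∀ i, finrank k (Bof i).carrier ≤ finrank k (X i).carrier := fun i => (hB i).2.1
  choose π hπ using fun i => (hB i).2.2.1
  choose ι hι using fun i => (hB i).2.2.2
  -- the bricks are pairwise Hom-orthogonal
  have horthB : ∀ i j : I, i ≠ j →
      ∀ f : (Bof i).carrier →ₗ[A] (Bof j).carrier, f = 0 := by
    intro i j hij f
    have h0 : (ι j).comp (f.comp (π i)) = 0 := (horth i j hij).1 _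
    ext x
    obtain ⟨y, rfl⟩ := hπ i x
    have h1 : (ι j) (f ((π i) y)) = 0 := by
      have := congrArg (fun (g : (X i).carrier →ₗ[A] (X j).carrier) => g y) h0
      simpa using this
    have := hι j (a₁ := f ((π i) y)) (a₂ := 0) (by simpa using h1)
    simpa using this
  -- the bricks are pairwise non-isomorphic
  have hnisoB : ∀ i j : I, i ≠ j → ¬(Bof i).Iso (Bof j) := by
    intro i j hij ⟨e⟩
    have h0 : (e : (Bof i).carrier →ₗ[A] (Bof j).carrier) = 0 := horthB i j hij _
    obtain ⟨x, y, hxy⟩ := (hbrick i).1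
    apply hxy
    apply e.injective
    have hx : e x = 0 := by rw [← LinearEquiv.coe_coe, h0]; rfl
    have hy : e y = 0 := by rw [← LinearEquiv.coe_coe, h0]; rfl
    rw [hx, hy]
  -- dimension bounds for the bricks
  have hd1 : ∀ i, 1 ≤ finrank k (Bof i).carrier := by
    intro i
    haveI := (hbrick i).1
    exact finrank_pos (R := k) (M := (Bof i).carrier)
  have hdD : ∀ i, finrank k (Bof i).carrier ≤ D := fun i => le_trans (hle i) (hdim i)
  -- pigeonhole on dimensions
  set F : I → Fin (D + 1) := fun i => ⟨finrank k (Bof i).carrier, by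
    have := hdD i; omega⟩ with hF
  obtain ⟨y, hy⟩ := Finite.exists_infinite_fiber F
  haveI := hy
  set emb := Infinite.natEmbedding (F ⁻¹' {y}) with hemb
  refine ⟨(y : ℕ), ?_, ?_, ULift.{u} ℕ, fun j => Bof (emb j.down).1, inferInstance,
    fun j => hbrick _, ?_, ?_⟩
  · have h0 : F (emb 0).1 = y := (emb 0).2
    have := hd1 (emb 0).1
    have : (F (emb 0).1 : ℕ) = finrank k (Bof (emb 0).1).carrier := rfl
    omega
  · have h0 : F (emb 0).1 = y := (emb 0).2
    have := hdD (emb 0).1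
    have : (F (emb 0).1 : ℕ) = finrank k (Bof (emb 0).1).carrier := rfl
    omega
  · intro a b hab
    apply hnisoB
    intro h
    exact hab (ULift.ext a b (emb.injective (Subtype.ext h)))
  · intro j
    show finrank k (Bof (emb j.down).1).carrier = (y : ℕ)
    have h0 : F (emb j.down).1 = y := (emb j.down).2
    have h1 := congrArg Fin.val h0
    exact h1
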